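/- Let E be a real inner product space, L : E ≃L[ℝ] E a continuous linear equivalence, p ∈ ℝ with p ≠ 1, and N : E → E positively homogeneous of degree p and Fréchet differentiable at u*. Suppose L u* = N(u*) and ⟨N(u*), u*⟩ ≠ 0. Let γ = p/(p−1), s(x) = (⟨L x, x⟩ / ⟨N(x), x⟩)^γ, and F(x) = s(x) • L⁻¹(N(x)) (the classical Petviashvili method with the optimal exponent). Then F is differentiable at u* and (fderiv F u*)(u*) = 0; that is, with γ = p/(p−1) the dominant eigenvalue p of the classical fixed-point iteration is filtered to the eigenvalue 0 of the Petviashvili iteration matrix. -/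

import Mathlib

/-- For the classical Petviashvili method with the optimal exponent `γ = p/(p-1)`, the
dominant eigenvalue `p` of the classical fixed-point iteration matrix is filtered to the
eigenvalue `0`: `(fderiv F u*) u* = 0`. -/
theorem petviashvili_optimal_exponent_filters_eigenvalue
    {E : Type*} [NormedAddCommGroup E] [InnerProductSpace ℝ E]
    (L : E ≃L[ℝ] E) (p : ℝ) (hp : p ≠ 1) (N : E → E)
    (hN : ∀ t : ℝ, 0 < t → ∀ x : E, N (t • x) = t ^ p • N x)
    (ustar : E) (hNdiff : DifferentiableAt ℝ N ustar)
    (hsol : L ustar = N ustar)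
    (hne : (inner ℝ (N ustar) ustar : ℝ) ≠ 0) :
    DifferentiableAt ℝ
      (fun x => (((inner ℝ (L x) x : ℝ) / (inner ℝ (N x) x : ℝ)) ^ (p / (p - 1))) •
        L.symm (N x)) ustar ∧
    fderiv ℝ
      (fun x => (((inner ℝ (L x) x : ℝ) / (inner ℝ (N x) x : ℝ)) ^ (p / (p - 1))) •
        L.symm (N x)) ustar ustar = 0 := by
  set γ : ℝ := p / (p - 1) with hγ
  set F : E → E := fun x =>
    (((inner ℝ (L x) x : ℝ) / (inner ℝ (N x) x : ℝ)) ^ γ) • L.symm (N x) with hF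
  -- Differentiability
  have hA : DifferentiableAt ℝ (fun x : E => (inner ℝ (L x) x : ℝ)) ustar :=
    DifferentiableAt.inner ℝ ((L : E →L[ℝ] E).differentiableAt) differentiableAt_fun_id
  have hB : DifferentiableAt ℝ (fun x : E => (inner ℝ (N x) x : ℝ)) ustar :=
    DifferentiableAt.inner ℝ hNdiff differentiableAt_fun_id
  have hrat : DifferentiableAt ℝ
      (fun x : E => (inner ℝ (L x) x : ℝ) / (inner ℝ (N x) x : ℝ)) ustar := by
    simp only [div_eq_mul_inv]
    exact hA.mul (hB.inv hne)
  have hratval : (inner ℝ (L ustar) ustar : ℝ) / (inner ℝ (N ustar) ustar : ℝ) = 1 := by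
    rw [hsol]; exact div_self hne
  have hone : (inner ℝ (L ustar) ustar : ℝ) / (inner ℝ (N ustar) ustar : ℝ) ≠ 0 := by
    rw [hratval]; norm_num
  have hs : DifferentiableAt ℝ
      (fun x : E => ((inner ℝ (L x) x : ℝ) / (inner ℝ (N x) x : ℝ)) ^ γ) ustar :=
    DifferentiableAt.rpow_const hrat (Or.inl hone)
  have hLsN : DifferentiableAt ℝ (fun x : E => L.symm (N x)) ustar :=
    ((L.symm : E →L[ℝ] E).differentiableAt).comp ustar hNdiff
  have hFd : DifferentiableAt ℝ F ustar := hs.smul hLsN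
  refine ⟨hFd, ?_⟩
  -- F is constant on the ray
  have hLsNu : L.symm (N ustar) = ustar := by rw [← hsol]; exact L.symm_apply_apply ustar
  have hp1 : p - 1 ≠ 0 := sub_ne_zero.mpr hp
  have key : ∀ t : ℝ, 0 < t → F (t • ustar) = ustar := by
    intro t ht
    have hL : (inner ℝ (L (t • ustar)) (t • ustar) : ℝ)
        = t ^ (2 : ℝ) * (inner ℝ (N ustar) ustar : ℝ) := by
      rw [map_smul, real_inner_smul_left, real_inner_smul_right, hsol,
        Real.rpow_two]
      ring
    have hNn : (inner ℝ (N (t • ustar)) (t • ustar) : ℝ)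
        = t ^ (p + 1) * (inner ℝ (N ustar) ustar : ℝ) := by
      rw [hN t ht, real_inner_smul_left, real_inner_smul_right,
        Real.rpow_add ht, Real.rpow_one]
      ring
    have hrt : (inner ℝ (L (t • ustar)) (t • ustar) : ℝ)
        / (inner ℝ (N (t • ustar)) (t • ustar) : ℝ) = t ^ (1 - p) := by
      rw [hL, hNn, mul_div_mul_right _ _ hne, ← Real.rpow_sub ht]
      congr 1; ring
    have hpow : (t ^ (1 - p)) ^ γ = t ^ (-p) := by
      rw [← Real.rpow_mul ht.le]
      congr 1
      rw [hγ, mul_div_assoc', div_eq_iff hp1]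
      ring
    calc F (t • ustar)
        = (t ^ (1 - p)) ^ γ • L.symm (N (t • ustar)) := by
          simp only [hF]; rw [hrt]
      _ = t ^ (-p) • L.symm (t ^ p • N ustar) := by rw [hpow, hN t ht]
      _ = (t ^ (-p) * t ^ p) • ustar := by rw [map_smul, hLsNu, smul_smul]
      _ = ustar := by rw [← Real.rpow_add ht]; simp
  -- directional derivative along ustar is 0
  have hφ : HasDerivAt (fun t : ℝ => t • ustar) ustar 1 := by
    simpa using (hasDerivAt_id (1 : ℝ)).smul_const ustar
  have hcomp : HasDerivAt (fun t : ℝ => F (t • ustar)) (fderiv ℝ F ustar ustar) 1 := by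
    have hD : HasFDerivAt F (fderiv ℝ F ustar) ((1 : ℝ) • ustar) := by
      rw [one_smul]; exact hFd.hasFDerivAt
    exact hD.comp_hasDerivAt 1 hφ
  have heq : (fun t : ℝ => F (t • ustar)) =ᶠ[nhds (1 : ℝ)] fun _ => ustar :=
    Filter.eventuallyEq_of_mem (Ioi_mem_nhds one_pos) (fun t ht => key t ht)
  have hconst : HasDerivAt (fun t : ℝ => F (t • ustar)) 0 1 :=
    (hasDerivAt_const (1 : ℝ) ustar).congr_of_eventuallyEq heq
  exact hcomp.unique hconst
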